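/- Let α be a badly approximable real number and θ > 1 a real constant. Then for all integers M ≥ 2, the sum for m = 1 to M of 1/(m^θ ‖mα‖^θ) is bounded above and below by positive constant multiples of log M, with constants depending only on α and θ. -/

import Mathlib

open scoped Real

/-- Distance from a real number to the nearest integer. -/
noncomputable def nd (x : ℝ) : ℝ := |x - round x|

/-- A real number is badly approximable if `‖qα‖ ≥ C/q` for all positive integers `q`. -/
def BadlyApprox (α : ℝ) : Prop := ∃ C > 0, ∀ q : ℕ, 0 < q → C / q ≤ nd (q * α)

lemma nd_nonneg (x : ℝ) : 0 ≤ nd x := abs_nonneg _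
lemma nd_le (x : ℝ) (z : ℤ) : nd x ≤ |x - z| := round_le x z
lemma nd_sub_int (x : ℝ) (z : ℤ) : nd (x - z) = nd x := by
  unfold nd; rw [round_sub_intCast]; push_cast; ring_nf

lemma nd_sub_le (u v : ℝ) : nd (u - v) ≤ |(u - round u) - (v - round v)| := by
  have h1 : nd (u - v) = nd ((u - v) - ((round u - round v : ℤ) : ℝ)) :=
    (nd_sub_int _ _).symm
  rw [h1]
  have := nd_le ((u - v) - ((round u - round v : ℤ) : ℝ)) 0
  simp only [Int.cast_zero, sub_zero] at this
  calc nd ((u - v) - ((round u - round v : ℤ) : ℝ)) ≤ |(u - v) - ((round u - round v : ℤ) : ℝ)| := this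
    _ = |(u - round u) - (v - round v)| := by push_cast; ring_nf

lemma block_bound (α C : ℝ) (hC : 0 < C) (h : ∀ q : ℕ, 0 < q → C / q ≤ nd (q * α))
    (θ : ℝ) (hθ : 1 < θ) (j : ℕ) :
    (∑ m ∈ Finset.Ico (2 ^ j : ℕ) (2 ^ (j + 1)), 1 / ((m : ℝ) ^ θ * nd (m * α) ^ θ)) ≤
      2 * ∑' n : ℕ, 1 / ((n : ℝ) ^ θ * (C / 4) ^ θ) := by
  classical
  set f : ℕ → ℝ := fun m => 1 / ((m : ℝ) ^ θ * nd (m * α) ^ θ) with hf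
  set B : ℕ → ℝ := fun n => 1 / ((n : ℝ) ^ θ * (C / 4) ^ θ) with hB
  have hBnn : ∀ n, 0 ≤ B n := fun n =>
    div_nonneg zero_le_one (mul_nonneg (Real.rpow_nonneg (Nat.cast_nonneg _) _)
      (Real.rpow_nonneg (by positivity) _))
  have hBsum : Summable B := by
    have h1 : Summable (fun n : ℕ => (1 / (C / 4) ^ θ) * (1 / (n : ℝ) ^ θ)) :=
      (Real.summable_one_div_nat_rpow.mpr hθ).mul_left _
    apply h1.congr
    intro n
    rw [hB, one_div_mul_one_div, mul_comm ((C/4)^θ)]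
  set N : ℕ := 2 ^ j with hN
  have hN1 : 1 ≤ N := Nat.one_le_two_pow
  have hNpos : (0 : ℝ) < N := by exact_mod_cast hN1
  set δ : ℝ := C / N with hδ
  have hδpos : 0 < δ := div_pos hC hNpos
  have hNδ : (N:ℝ) * δ = C := by rw [hδ]; field_simp
  set g : ℕ → ℕ := fun m => ⌈nd (m * α) / (δ / 2)⌉₊ with hg
  set block : Finset ℕ := Finset.Ico N (2 * N) with hblock
  have hblockeq : Finset.Ico (2 ^ j : ℕ) (2 ^ (j + 1)) = block := by
    rw [hblock, hN]; congr 1; ring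
  have hmem : ∀ m ∈ block, N ≤ m ∧ m < 2 * N := by
    intro m hm; rwa [hblock, Finset.mem_Ico] at hm
  have hndlb : ∀ m ∈ block, δ / 2 ≤ nd (m * α) ∧ 0 < m := by
    intro m hm
    obtain ⟨h1, h2⟩ := hmem m hm
    have hm0 : 0 < m := lt_of_lt_of_le hN1 h1
    refine ⟨le_trans ?_ (h m hm0), hm0⟩
    rw [hδ, div_div]
    apply div_le_div_of_nonneg_left hC.le (by exact_mod_cast hm0)
    have : (m:ℝ) ≤ 2 * N := by exact_mod_cast h2.le
    linarith [this]
  -- term bound: f m ≤ B (g m)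
  have hterm : ∀ m ∈ block, f m ≤ B (g m) := by
    intro m hm
    obtain ⟨hnd2, hm0⟩ := hndlb m hm
    obtain ⟨hmN, _⟩ := hmem m hm
    have hndpos : 0 < nd ((m:ℝ) * α) := lt_of_lt_of_le (by positivity) hnd2
    have hmR : (0:ℝ) < m := by exact_mod_cast hm0
    have hmNR : (N:ℝ) ≤ m := by exact_mod_cast hmN
    set r : ℝ := nd (m * α) / (δ / 2) with hr
    have hr1 : 1 ≤ r := (one_le_div (by positivity)).mpr hnd2
    have hgm : (g m : ℝ) < 2 * r := by
      calc (g m : ℝ) < r + 1 := Nat.ceil_lt_add_one (by positivity)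
        _ ≤ 2 * r := by linarith
    have hgpos : 0 < g m := Nat.ceil_pos.mpr (by positivity)
    have hgR : (0:ℝ) < g m := by exact_mod_cast hgpos
    have hrnd : nd ((m:ℝ) * α) = r * (δ / 2) := by rw [hr]; field_simp
    have hkey : (g m : ℝ) * (C / 4) ≤ (m : ℝ) * nd ((m:ℝ) * α) := by
      nlinarith [mul_le_mul_of_nonneg_right hmNR hndpos.le]
    have hpow : ((g m : ℝ) * (C / 4)) ^ θ ≤ ((m : ℝ) * nd ((m:ℝ) * α)) ^ θ :=
      Real.rpow_le_rpow (by positivity) hkey (by linarith)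
    rw [Real.mul_rpow (by positivity) (by positivity),
        Real.mul_rpow (by positivity) (by positivity)] at hpow
    rw [hf, hB]
    apply one_div_le_one_div_of_le (by positivity) hpow
  -- fiber bound: each fiber of g on block has ≤ 2 elements
  have hfiber : ∀ n : ℕ, (block.filter (fun m => g m = n)).card ≤ 2 := by
    intro n
    by_contra hcon
    push_neg at hcon
    obtain ⟨a, b, c, ha, hb, hc, hab, hac, hbc⟩ := Finset.two_lt_card_iff.mp hcon
    simp only [Finset.mem_filter] at ha hb hc
    -- key: two elements of same fiber with same sign of e lead to contradiction
    set e : ℕ → ℝ := fun m => (m:ℝ) * α - round ((m:ℝ) * α) with he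
    clear_value e
    have key : ∀ x y : ℕ, x ∈ block → y ∈ block → g x = g y → y < x →
        ((0 ≤ e x) ↔ (0 ≤ e y)) → False := by
      intro x y hx hy hgxy hyx hsign
      obtain ⟨hxN, hx2N⟩ := hmem x hx
      obtain ⟨hyN, hy2N⟩ := hmem y hy
      set d : ℕ := x - y with hd
      have hd0 : 0 < d := by omega
      have hdN : d < N := by omega
      have hdR : (0:ℝ) < d := by exact_mod_cast hd0
      have hdNR : (d:ℝ) < N := by exact_mod_cast hdN
      -- nd(dα) ≥ C/d > C/N = δ
      have h1 : C / (d:ℝ) ≤ nd (d * α) := h d hd0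
      have h2 : δ < C / d := by
        rw [hδ]
        apply div_lt_div_of_pos_left hC hdR hdNR
      -- nd(dα) ≤ |e x - e y|
      have hcast : ((d:ℕ):ℝ) * α = (x:ℝ) * α - (y:ℝ) * α := by
        have : ((d:ℕ):ℝ) = (x:ℝ) - y := by
          rw [hd]; push_cast [Nat.cast_sub hyx.le]; ring
        rw [this]; ring
      have h3 : nd ((d:ℝ) * α) ≤ |e x - e y| := by
        rw [hcast, he]
        exact nd_sub_le _ _
      -- bounds on nd(xα), nd(yα) from ceil
      have hnx := hndlb x hx
      have hny := hndlb y hy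
      have hbnd : ∀ z : ℕ, z ∈ block → g z = g x →
          ((g x : ℝ) - 1) * (δ/2) < nd ((z:ℝ) * α) ∧ nd ((z:ℝ) * α) ≤ (g x : ℝ) * (δ/2) := by
        intro z hz hgz
        obtain ⟨hz2, hz0⟩ := hndlb z hz
        have hndz : 0 < nd ((z:ℝ) * α) := lt_of_lt_of_le (by positivity) hz2
        have hgxpos : g x ≠ 0 := by
          rw [← hgz, hg]
          simp only [ne_eq, Nat.ceil_eq_zero, not_le]
          exact div_pos hndz (by positivity)
        have hgzceil : ⌈nd ((z:ℝ) * α) / (δ / 2)⌉₊ = g x := hgz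
        obtain ⟨hlo, hhi⟩ := (Nat.ceil_eq_iff hgxpos).mp hgzceil
        constructor
        · have hlo' : ((g x - 1 : ℕ) : ℝ) < nd ((z:ℝ) * α) / (δ/2) := hlo
          have : ((g x : ℝ) - 1) ≤ ((g x - 1 : ℕ) : ℝ) := by
            have hgx1 : 1 ≤ g x := Nat.one_le_iff_ne_zero.mpr hgxpos
            rw [Nat.cast_sub hgx1]; norm_num
          have h5 : ((g x : ℝ) - 1) < nd ((z:ℝ) * α) / (δ/2) := lt_of_le_of_lt this hlo'
          calc ((g x : ℝ) - 1) * (δ/2) < (nd ((z:ℝ) * α) / (δ/2)) * (δ/2) := by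
                apply mul_lt_mul_of_pos_right h5 (by positivity)
            _ = nd ((z:ℝ) * α) := by field_simp
        · have hhi' : nd ((z:ℝ) * α) / (δ/2) ≤ (g x : ℝ) := hhi
          calc nd ((z:ℝ) * α) = (nd ((z:ℝ) * α) / (δ/2)) * (δ/2) := by field_simp
            _ ≤ (g x : ℝ) * (δ/2) := by apply mul_le_mul_of_nonneg_right hhi' (by positivity)
      obtain ⟨hxlo, hxhi⟩ := hbnd x hx rfl
      obtain ⟨hylo, hyhi⟩ := hbnd y hy hgxy.symm
      -- same sign ⇒ |e x - e y| < δ/2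
      have h4 : |e x - e y| < δ / 2 := by
        have hex : |e x| = nd ((x:ℝ) * α) := by rw [he]; rfl
        have hey : |e y| = nd ((y:ℝ) * α) := by rw [he]; rfl
        rcases (em (0 ≤ e x)) with hpx | hpx
        · have hpy : 0 ≤ e y := hsign.mp hpx
          rw [abs_of_nonneg hpx] at hex
          rw [abs_of_nonneg hpy] at hey
          rw [abs_lt]
          constructor <;> linarith only [hex, hey, hxlo, hxhi, hylo, hyhi]
        · have hpy : ¬ (0 ≤ e y) := fun hy' => hpx (hsign.mpr hy')
          push_neg at hpx hpy
          rw [abs_of_neg hpx] at hex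
          rw [abs_of_neg hpy] at hey
          rw [abs_lt]
          constructor <;> linarith only [hex, hey, hxlo, hxhi, hylo, hyhi]
      linarith [h1, h2, h3, h4, hδpos]
    -- pigeonhole on signs among a b c
    have key2 : ∀ x y : ℕ, (x ∈ block ∧ g x = n) → (y ∈ block ∧ g y = n) → x ≠ y →
        ((0 ≤ e x) ↔ (0 ≤ e y)) → False := by
      intro x y hx hy hxy hsign
      rcases hxy.lt_or_gt with h' | h'
      · exact key y x hy.1 hx.1 (hy.2.trans hx.2.symm) h' hsign.symm
      · exact key x y hx.1 hy.1 (hx.2.trans hy.2.symm) h' hsign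
    by_cases h1 : (0 ≤ e a) ↔ (0 ≤ e b)
    · exact key2 a b ha hb hab h1
    · by_cases h2 : (0 ≤ e a) ↔ (0 ≤ e c)
      · exact key2 a c ha hc hac h2
      · exact key2 b c hb hc hbc (by tauto)
  -- assemble
  rw [hblockeq]
  have hfnn : ∀ m, 0 ≤ f m := fun m =>
    div_nonneg zero_le_one (mul_nonneg (Real.rpow_nonneg (Nat.cast_nonneg _) _)
      (Real.rpow_nonneg (nd_nonneg _) _))
  have hsplit : ∑ m ∈ block, f m = ∑ n ∈ block.image g, ∑ m ∈ block.filter (fun m => g m = n), f m := by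
    rw [Finset.sum_fiberwise_eq_sum_filter block (block.image g) g f]
    congr 1
    symm
    apply Finset.filter_true_of_mem
    intro m hm
    exact Finset.mem_image_of_mem g hm
  rw [hsplit]
  have hstep : ∀ n ∈ block.image g, ∑ m ∈ block.filter (fun m => g m = n), f m ≤ 2 * B n := by
    intro n _
    calc ∑ m ∈ block.filter (fun m => g m = n), f m
        ≤ (block.filter (fun m => g m = n)).card • B n := by
          apply Finset.sum_le_card_nsmul
          intro m hm
          rw [Finset.mem_filter] at hm
          rw [← hm.2]
          exact hterm m hm.1
      _ ≤ 2 * B n := by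
          rw [nsmul_eq_mul]
          apply mul_le_mul_of_nonneg_right _ (hBnn n)
          exact_mod_cast hfiber n
  calc ∑ n ∈ block.image g, ∑ m ∈ block.filter (fun m => g m = n), f m
      ≤ ∑ n ∈ block.image g, 2 * B n := Finset.sum_le_sum hstep
    _ = 2 * ∑ n ∈ block.image g, B n := by rw [Finset.mul_sum]
    _ ≤ 2 * ∑' n, B n := by
        apply mul_le_mul_of_nonneg_left _ (by norm_num)
        exact Summable.sum_le_tsum _ (fun i _ => hBnn i) hBsum

lemma lower_bound (α C : ℝ) (hC : 0 < C) (h : ∀ q : ℕ, 0 < q → C / q ≤ nd (q * α))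
    (θ : ℝ) (hθ : 1 < θ) :
    ∃ k > 0, ∀ M : ℕ, 2 ≤ M →
      k * Real.log M ≤ (∑ m ∈ Finset.Icc 1 M, 1 / ((m : ℝ) ^ θ * nd (m * α) ^ θ)) := by
  set f : ℕ → ℝ := fun m => 1 / ((m : ℝ) ^ θ * nd (m * α) ^ θ) with hf
  have hfnn : ∀ m, 0 ≤ f m := fun m =>
    div_nonneg zero_le_one (mul_nonneg (Real.rpow_nonneg (Nat.cast_nonneg _) _)
      (Real.rpow_nonneg (nd_nonneg _) _))
  set A : ℕ := ⌈2 / C⌉₊ + 2 with hA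
  have hA2 : 2 ≤ A := by omega
  have hAC : 2 < C * A := by
    have h1 : (2 / C : ℝ) ≤ ⌈2 / C⌉₊ := Nat.le_ceil _
    have h2 : (2 / C : ℝ) < A := by
      push_cast [hA]; linarith
    calc (2:ℝ) = C * (2 / C) := by field_simp
    _ < C * A := by exact mul_lt_mul_of_pos_left h2 hC
  have H : ∀ i : ℕ, ∃ qi : ℕ, 0 < qi ∧ qi ≤ A ^ i ∧ nd (qi * α) ≤ 1 / ((A : ℝ) ^ i + 1) := by
    intro i
    obtain ⟨k, hk0, hk1, hk2⟩ := Real.exists_nat_abs_mul_sub_round_le α (n := A ^ i)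
      (pow_pos (by omega) i)
    exact ⟨k, hk0, hk1, by simpa [nd] using hk2⟩
  choose q hq0 hqle hqnd using H
  -- q i > C * A^i
  have hqlb : ∀ i, C * (A : ℝ) ^ i < q i := by
    intro i
    have h1 : C / q i ≤ 1 / ((A : ℝ) ^ i + 1) := le_trans (h (q i) (hq0 i)) (hqnd i)
    have hq : (0:ℝ) < q i := by exact_mod_cast hq0 i
    have hApos : (0:ℝ) < (A:ℝ) ^ i := by positivity
    rw [div_le_div_iff₀ hq (by positivity)] at h1
    nlinarith
  -- strict mono
  have hmono : ∀ i j, i < j → q i < q j := by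
    intro i j hij
    have h1 : (q i : ℝ) ≤ (A : ℝ) ^ i := by exact_mod_cast hqle i
    have h2 : C * (A : ℝ) ^ j < q j := hqlb j
    have h3 : (A : ℝ) ^ (i + 1) ≤ (A : ℝ) ^ j := by
      apply pow_le_pow_right₀ (by exact_mod_cast Nat.one_le_of_lt hA2)
      omega
    have h4 : (0:ℝ) < (A:ℝ) ^ i := by positivity
    have : (q i : ℝ) < q j := by
      have : C * (A:ℝ) ^ (i+1) ≤ C * (A:ℝ) ^ j := by
        exact mul_le_mul_of_nonneg_left h3 hC.le
      have h5 : C * (A:ℝ) ^ (i+1) = (C * A) * (A:ℝ) ^ i := by ring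
      nlinarith
    exact_mod_cast this
  -- each f (q i) ≥ 1
  have hf1 : ∀ i, 1 ≤ f (q i) := by
    intro i
    have hq : (0:ℝ) < q i := by exact_mod_cast hq0 i
    have hndpos : 0 < nd ((q i : ℝ) * α) :=
      lt_of_lt_of_le (div_pos hC hq) (h (q i) (hq0 i))
    have hprod : (q i : ℝ) * nd ((q i : ℝ) * α) ≤ 1 := by
      have h1 : (q i : ℝ) * nd ((q i : ℝ) * α) ≤ (A:ℝ)^i * (1 / ((A : ℝ) ^ i + 1)) := by
        apply mul_le_mul (by exact_mod_cast hqle i) (hqnd i) hndpos.le (by positivity)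
      have h2 : (A:ℝ)^i * (1 / ((A : ℝ) ^ i + 1)) ≤ 1 := by
        rw [mul_one_div, div_le_one (by positivity)]; linarith
      linarith
    have key : (q i : ℝ) ^ θ * nd ((q i : ℝ) * α) ^ θ ≤ 1 := by
      rw [← Real.mul_rpow hq.le hndpos.le]
      calc ((q i : ℝ) * nd ((q i : ℝ) * α)) ^ θ ≤ 1 ^ θ :=
            Real.rpow_le_rpow (by positivity) hprod (by linarith)
        _ = 1 := Real.one_rpow θ
    have hpos : 0 < (q i : ℝ) ^ θ * nd ((q i : ℝ) * α) ^ θ := by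
      apply mul_pos (Real.rpow_pos_of_pos hq θ) (Real.rpow_pos_of_pos hndpos θ)
    rw [hf]
    dsimp only
    rw [le_div_iff₀ hpos, one_mul]
    exact key
  -- main
  have hlogA : 0 < Real.log A :=
    Real.log_pos (by exact_mod_cast hA2)
  refine ⟨1 / Real.log A, by positivity, fun M hM => ?_⟩
  set T : ℕ := Nat.log A M + 1 with hT
  set S : Finset ℕ := (Finset.range T).image q with hS
  have hSsub : S ⊆ Finset.Icc 1 M := by
    intro m hm
    simp only [hS, Finset.mem_image, Finset.mem_range] at hm
    obtain ⟨i, hi, rfl⟩ := hm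
    rw [Finset.mem_Icc]
    refine ⟨hq0 i, le_trans (hqle i) ?_⟩
    calc A ^ i ≤ A ^ (Nat.log A M) := Nat.pow_le_pow_right (by omega) (by omega)
      _ ≤ M := Nat.pow_log_le_self A (by omega)
  have hcard : S.card = T := by
    rw [hS, Finset.card_image_of_injOn, Finset.card_range]
    intro i _ j _ hij
    by_contra hne
    rcases Nat.lt_or_ge i j with h' | h'
    · exact absurd hij (Nat.ne_of_lt (hmono i j h'))
    · exact absurd hij.symm (Nat.ne_of_lt (hmono j i (by omega)))
  have hsum1 : (T : ℝ) ≤ ∑ m ∈ S, f m := by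
    calc (T:ℝ) = S.card • (1:ℝ) := by rw [hcard]; simp
    _ ≤ ∑ m ∈ S, f m := by
        apply Finset.card_nsmul_le_sum
        intro m hm
        simp only [hS, Finset.mem_image, Finset.mem_range] at hm
        obtain ⟨i, _, rfl⟩ := hm
        exact hf1 i
  have hsum2 : ∑ m ∈ S, f m ≤ ∑ m ∈ Finset.Icc 1 M, f m :=
    Finset.sum_le_sum_of_subset_of_nonneg hSsub (fun m _ _ => hfnn m)
  have hTlog : Real.log M ≤ T * Real.log A := by
    have h1 : (M:ℝ) < (A:ℝ) ^ T := by exact_mod_cast Nat.lt_pow_succ_log_self (by omega) M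
    calc Real.log M ≤ Real.log ((A:ℝ)^T) :=
          Real.log_le_log (by positivity) h1.le
      _ = T * Real.log A := by rw [Real.log_pow]
  calc 1 / Real.log A * Real.log M ≤ 1 / Real.log A * (T * Real.log A) := by
        apply mul_le_mul_of_nonneg_left hTlog (by positivity)
    _ = T := by field_simp
    _ ≤ ∑ m ∈ Finset.Icc 1 M, f m := le_trans hsum1 hsum2

lemma upper_bound (α C : ℝ) (hC : 0 < C) (h : ∀ q : ℕ, 0 < q → C / q ≤ nd (q * α))
    (θ : ℝ) (hθ : 1 < θ) :
    ∃ K > 0, ∀ M : ℕ, 2 ≤ M →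
      (∑ m ∈ Finset.Icc 1 M, 1 / ((m : ℝ) ^ θ * nd (m * α) ^ θ)) ≤ K * Real.log M := by
  set f : ℕ → ℝ := fun m => 1 / ((m : ℝ) ^ θ * nd (m * α) ^ θ) with hf
  have hfnn : ∀ m, 0 ≤ f m := fun m =>
    div_nonneg zero_le_one (mul_nonneg (Real.rpow_nonneg (Nat.cast_nonneg _) _)
      (Real.rpow_nonneg (nd_nonneg _) _))
  set K₀ : ℝ := 2 * ∑' n : ℕ, 1 / ((n : ℝ) ^ θ * (C / 4) ^ θ) with hK₀
  have hK₀nn : 0 ≤ K₀ := by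
    rw [hK₀]
    apply mul_nonneg (by norm_num)
    apply tsum_nonneg
    intro n
    apply div_nonneg zero_le_one
    exact mul_nonneg (Real.rpow_nonneg (Nat.cast_nonneg _) _) (Real.rpow_nonneg (by positivity) _)
  have claim : ∀ L : ℕ, (∑ m ∈ Finset.Ico 1 (2 ^ L), f m) ≤ L * K₀ := by
    intro L
    induction L with
    | zero => simp
    | succ L ih =>
      have h1 : (1:ℕ) ≤ 2 ^ L := Nat.one_le_two_pow
      have h2 : (2:ℕ) ^ L ≤ 2 ^ (L + 1) := Nat.pow_le_pow_right (by norm_num) (by omega)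
      rw [← Finset.sum_Ico_consecutive f h1 h2]
      have hb := block_bound α C hC h θ hθ L
      push_cast
      calc (∑ m ∈ Finset.Ico 1 (2 ^ L), f m) + ∑ m ∈ Finset.Ico (2 ^ L : ℕ) (2 ^ (L + 1)), f m
          ≤ L * K₀ + K₀ := by
            apply add_le_add ih
            rw [hK₀]; exact hb
        _ = (L + 1) * K₀ := by ring
  have hlog2 : (0:ℝ) < Real.log 2 := Real.log_pos (by norm_num)
  refine ⟨2 * K₀ / Real.log 2 + 1, by positivity, fun M hM => ?_⟩
  set J : ℕ := Nat.log 2 M with hJ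
  have hJ1 : 1 ≤ J := Nat.log_pos (by norm_num) hM
  have hsub : Finset.Icc 1 M ⊆ Finset.Ico 1 (2 ^ (J + 1)) := by
    intro m hm
    rw [Finset.mem_Icc] at hm
    rw [Finset.mem_Ico]
    exact ⟨hm.1, lt_of_le_of_lt hm.2 (Nat.lt_pow_succ_log_self (by norm_num) M)⟩
  have hJlog : (J : ℝ) * Real.log 2 ≤ Real.log M := by
    have h1 : ((2:ℝ)) ^ J ≤ M := by exact_mod_cast Nat.pow_log_le_self 2 (by omega)
    calc (J : ℝ) * Real.log 2 = Real.log ((2:ℝ) ^ J) := by rw [Real.log_pow]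
      _ ≤ Real.log M := Real.log_le_log (by positivity) h1
  have hlogM : 0 ≤ Real.log M := by
    apply Real.log_nonneg
    exact_mod_cast Nat.one_le_of_lt hM
  calc ∑ m ∈ Finset.Icc 1 M, f m
      ≤ ∑ m ∈ Finset.Ico 1 (2 ^ (J + 1)), f m :=
        Finset.sum_le_sum_of_subset_of_nonneg hsub (fun m _ _ => hfnn m)
    _ ≤ (J + 1) * K₀ := by have := claim (J + 1); push_cast at this ⊢; linarith
    _ ≤ (2 * J) * K₀ := by
        apply mul_le_mul_of_nonneg_right _ hK₀nn
        have : (1:ℝ) ≤ J := by exact_mod_cast hJ1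
        linarith
    _ = (2 * K₀ / Real.log 2) * ((J:ℝ) * Real.log 2) := by field_simp
    _ ≤ (2 * K₀ / Real.log 2) * Real.log M := by
        apply mul_le_mul_of_nonneg_left hJlog (by positivity)
    _ ≤ (2 * K₀ / Real.log 2 + 1) * Real.log M := by
        apply mul_le_mul_of_nonneg_right _ hlogM
        linarith

theorem stmt2 (α : ℝ) (hα : BadlyApprox α) (θ : ℝ) (hθ : 1 < θ) :
    ∃ k > 0, ∃ K > 0, ∀ M : ℕ, 2 ≤ M →
      k * Real.log M ≤ (∑ m ∈ Finset.Icc 1 M, 1 / ((m : ℝ) ^ θ * nd (m * α) ^ θ)) ∧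
      (∑ m ∈ Finset.Icc 1 M, 1 / ((m : ℝ) ^ θ * nd (m * α) ^ θ)) ≤ K * Real.log M := by
  obtain ⟨C, hC, h⟩ := hα
  obtain ⟨k, hk, hlow⟩ := lower_bound α C hC h θ hθ
  obtain ⟨K, hK, hup⟩ := upper_bound α C hC h θ hθ
  exact ⟨k, hk, K, hK, fun M hM => ⟨hlow M hM, hup M hM⟩⟩
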